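/- Let (H, ‖·‖) be a separable Hilbert space, X an H-valued random variable with 𝔼‖X‖² < ∞, and B(u) := 𝔼[⟨u, X⟩ X] its uncentered covariance operator, with eigenvalues λ₁ ≥ λ₂ ≥ … ≥ 0 and orthonormal eigenvectors {v_i}. Setting η_i := ⟨X, v_i⟩/√λ_i (for λ_i > 0), for every n ∈ ℕ₊ the random variable X_n := Σ_{i=1}^n √λ_i η_i v_i satisfies 𝔼‖X − X_n‖² = inf_{Z ∈ Q_n} 𝔼‖X − Z‖² = Σ_{i=n+1}^∞ λ_i, where Q_n := {Z ∈ L²_H : there exists a subspace V ⊆ H with dim(V) ≤ n such that Z ∈ V almost surely}. -/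

import Mathlib

open scoped InnerProductSpace RealInnerProductSpace
open MeasureTheory

private lemma orthonormal_norm_sq_sum {E : Type*} [NormedAddCommGroup E] [InnerProductSpace ℝ E]
    {ι : Type*} {g : ι → E} (hg : Orthonormal ℝ g) (l : ι → ℝ) (s : Finset ι) :
    ‖∑ i ∈ s, l i • g i‖ ^ 2 = ∑ i ∈ s, l i ^ 2 := by
  rw [← real_inner_self_eq_norm_sq, hg.inner_sum]
  simp [sq]

private lemma kyfan_aux (lam c : ℕ → ℝ) (m : ℕ) (hmono : Antitone lam)
    (hc0 : ∀ i, 0 ≤ c i) (hcs : Summable c) (hlc : Summable fun i => lam i * c i)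
    (hc1 : ∀ i, c i ≤ 1) (hsum : ∑' i, c i = (m : ℝ)) :
    ∑' i, lam i * c i ≤ ∑ i ∈ Finset.range m, lam i := by
  have hcs' : Summable fun i => c (i + m) := (summable_nat_add_iff m).2 hcs
  have hlc' : Summable fun i => lam (i + m) * c (i + m) := (summable_nat_add_iff m).2 hlc
  have h1 : ∑ i ∈ Finset.range m, lam i * c i + ∑' i, lam (i + m) * c (i + m)
      = ∑' i, lam i * c i := Summable.sum_add_tsum_nat_add m hlc
  have h2 : ∑ i ∈ Finset.range m, c i + ∑' i, c (i + m) = ∑' i, c i :=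
    Summable.sum_add_tsum_nat_add m hcs
  have h6 : ∑' i, c (i + m) = (m : ℝ) - ∑ i ∈ Finset.range m, c i := by linarith
  have h3 : ∑' i, lam (i + m) * c (i + m)
      ≤ lam m * ((m : ℝ) - ∑ i ∈ Finset.range m, c i) := by
    rw [← h6, ← tsum_mul_left]
    exact Summable.tsum_le_tsum (fun i => mul_le_mul_of_nonneg_right
      (hmono (Nat.le_add_left m i)) (hc0 _)) hlc' (hcs'.mul_left _)
  have h4 : ∑ i ∈ Finset.range m, (lam i * c i + lam m * (1 - c i))
      = ∑ i ∈ Finset.range m, lam i * c i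
        + lam m * ((m : ℝ) - ∑ i ∈ Finset.range m, c i) := by
    rw [Finset.sum_add_distrib, ← Finset.mul_sum, Finset.sum_sub_distrib, Finset.sum_const,
      Finset.card_range, nsmul_eq_mul, mul_one]
  have h5 : ∑ i ∈ Finset.range m, (lam i * c i + lam m * (1 - c i))
      ≤ ∑ i ∈ Finset.range m, lam i := by
    refine Finset.sum_le_sum fun i hi => ?_
    have him : lam m ≤ lam i := hmono (Finset.mem_range.1 hi).le
    nlinarith [hc0 i, hc1 i]
  linarith

/-- (Optimality of the truncated Kosambi–Karhunen–Loève / POD expansion.)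
Let `X` be an `H`-valued random variable with `𝔼‖X‖² < ∞` and let `B u = 𝔼[⟪u, X⟫ X]` be
its uncentered covariance operator, with nonincreasing nonnegative eigenvalues `λ i` and
corresponding complete orthonormal system of eigenvectors `v i`. For `n ≥ 1`, the truncation
`X_n = Σ_{i=1}^n √λ_i η_i v_i = Σ_{i=1}^n ⟪X, v_i⟫ v_i` (with `η_i = ⟪X, v_i⟫/√λ_i`)
satisfies `𝔼‖X − X_n‖² = inf_{Z ∈ Q_n} 𝔼‖X − Z‖² = Σ_{i=n+1}^∞ λ_i`, where `Q_n` is the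
set of square-integrable random variables supported (a.s.) in a subspace of dimension ≤ n. -/
theorem pod_truncation_optimal
    {H : Type*} [NormedAddCommGroup H] [InnerProductSpace ℝ H]
    [CompleteSpace H] [TopologicalSpace.SeparableSpace H]
    [MeasurableSpace H] [BorelSpace H]
    {Ω : Type*} [MeasurableSpace Ω] (ℙ : Measure Ω) [IsProbabilityMeasure ℙ]
    (X : Ω → H) (hXm : Measurable X)
    (hX2 : Integrable (fun ω => ‖X ω‖ ^ 2) ℙ)
    (B : H →L[ℝ] H) (hB : ∀ u : H, B u = ∫ ω, ⟪u, X ω⟫_ℝ • X ω ∂ℙ)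
    (lam : ℕ → ℝ) (v : ℕ → H)
    (hlam_mono : Antitone lam) (hlam_nonneg : ∀ i, 0 ≤ lam i)
    (hv_on : Orthonormal ℝ v)
    (heig : ∀ i, B (v i) = lam i • v i)
    (hcomplete : (Submodule.span ℝ (Set.range v)).topologicalClosure = ⊤)
    (n : ℕ) (hn : 0 < n) :
    (∫ ω, ‖X ω - ∑ i ∈ Finset.range n, ⟪X ω, v i⟫_ℝ • v i‖ ^ 2 ∂ℙ) =
        sInf {r : ℝ | ∃ Z : Ω → H, MemLp Z 2 ℙ ∧
          (∃ V : Submodule ℝ H, Module.rank ℝ V ≤ (n : Cardinal) ∧ ∀ᵐ ω ∂ℙ, Z ω ∈ V) ∧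
          r = ∫ ω, ‖X ω - Z ω‖ ^ 2 ∂ℙ} ∧
      sInf {r : ℝ | ∃ Z : Ω → H, MemLp Z 2 ℙ ∧
          (∃ V : Submodule ℝ H, Module.rank ℝ V ≤ (n : Cardinal) ∧ ∀ᵐ ω ∂ℙ, Z ω ∈ V) ∧
          r = ∫ ω, ‖X ω - Z ω‖ ^ 2 ∂ℙ} =
        ∑' i : ℕ, lam (n + i) := by
  classical
  have hv_norm : ∀ i, ‖v i‖ = 1 := fun i => hv_on.1 i
  let b : HilbertBasis ℕ ℝ H := HilbertBasis.mk hv_on hcomplete.ge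
  have hb : ⇑b = v := HilbertBasis.coe_mk hv_on hcomplete.ge
  have hbi : ∀ i, b i = v i := fun i => congrFun hb i
  -- summability of squared coefficients (Bessel)
  have summable_coef : ∀ x : H, Summable fun i => ⟪x, v i⟫_ℝ ^ 2 := fun x => by
    refine (hv_on.inner_products_summable x).congr fun i => ?_
    rw [Real.norm_eq_abs, sq_abs, real_inner_comm]
  -- Parseval
  have parseval : ∀ x : H, (∑' i, ⟪x, v i⟫_ℝ ^ 2) = ‖x‖ ^ 2 := fun x => by
    have h := b.tsum_inner_mul_inner x x
    simp only [hbi] at h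
    rw [← real_inner_self_eq_norm_sq, ← h]
    exact tsum_congr fun i => by rw [sq, real_inner_comm x (v i)]
  -- integrability facts
  have coef_meas : ∀ e : H, Measurable fun ω => ⟪X ω, e⟫_ℝ := fun e =>
    (Continuous.inner continuous_id continuous_const).measurable.comp hXm
  have coef_sq_int : ∀ e : H, ‖e‖ ≤ 1 → Integrable (fun ω => ⟪X ω, e⟫_ℝ ^ 2) ℙ := fun e he => by
    refine hX2.mono' ((coef_meas e).pow_const 2).aestronglyMeasurable
      (Filter.Eventually.of_forall fun ω => ?_)
    have h1 : |⟪X ω, e⟫_ℝ| ≤ ‖X ω‖ * ‖e‖ := abs_real_inner_le_norm _ _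
    have h2 : ‖X ω‖ * ‖e‖ ≤ ‖X ω‖ := mul_le_of_le_one_right (norm_nonneg _) he
    have h3 : |⟪X ω, e⟫_ℝ| ≤ ‖X ω‖ := h1.trans h2
    rw [Real.norm_eq_abs, abs_pow]
    nlinarith [abs_nonneg ⟪X ω, e⟫_ℝ]
  have smul_int : ∀ e : H, Integrable (fun ω => ⟪e, X ω⟫_ℝ • X ω) ℙ := fun e => by
    have hcont : Continuous fun x : H => ⟪e, x⟫_ℝ • x :=
      (Continuous.inner continuous_const continuous_id).smul continuous_id
    refine (hX2.const_mul ‖e‖).mono' (hcont.measurable.comp hXm).aestronglyMeasurable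
      (Filter.Eventually.of_forall fun ω => ?_)
    rw [norm_smul]
    have h1 : ‖⟪e, X ω⟫_ℝ‖ ≤ ‖e‖ * ‖X ω‖ := norm_inner_le_norm _ _
    calc ‖⟪e, X ω⟫_ℝ‖ * ‖X ω‖ ≤ ‖e‖ * ‖X ω‖ * ‖X ω‖ :=
          mul_le_mul_of_nonneg_right h1 (norm_nonneg _)
      _ = ‖e‖ * ‖X ω‖ ^ 2 := by ring
  -- diagonal values of B
  have B_diag : ∀ e : H, ⟪e, B e⟫_ℝ = ∫ ω, ⟪e, X ω⟫_ℝ ^ 2 ∂ℙ := fun e => by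
    rw [hB e, ← integral_inner (smul_int e) e]
    exact integral_congr_ae (Filter.Eventually.of_forall fun ω => by
      simp only [real_inner_smul_right, pow_two])
  have B_diag' : ∀ e : H, (∫ ω, ⟪X ω, e⟫_ℝ ^ 2 ∂ℙ) = ⟪e, B e⟫_ℝ := fun e => by
    rw [B_diag e]
    exact integral_congr_ae (Filter.Eventually.of_forall fun ω =>
      congrArg (· ^ 2) (real_inner_comm _ _))
  have lam_eq : ∀ i, (∫ ω, ⟪X ω, v i⟫_ℝ ^ 2 ∂ℙ) = lam i := fun i => by
    rw [B_diag' (v i), heig i, real_inner_smul_right, real_inner_self_eq_norm_sq, hv_norm i]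
    ring
  -- summability of the eigenvalues
  have hlam_sum : Summable lam := by
    refine summable_of_sum_range_le (c := ∫ ω, ‖X ω‖ ^ 2 ∂ℙ) hlam_nonneg fun k => ?_
    have h1 : ∑ i ∈ Finset.range k, lam i
        = ∫ ω, ∑ i ∈ Finset.range k, ⟪X ω, v i⟫_ℝ ^ 2 ∂ℙ := by
      rw [integral_finset_sum _ fun i _ => coef_sq_int (v i) (hv_norm i).le]
      exact (Finset.sum_congr rfl fun i _ => (lam_eq i).symm)
    rw [h1]
    refine integral_mono (integrable_finset_sum _ fun i _ => coef_sq_int (v i) (hv_norm i).le)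
      hX2 fun ω => ?_
    have h := hv_on.sum_inner_products_le (X ω) (s := Finset.range k)
    refine le_trans (le_of_eq ?_) h
    exact Finset.sum_congr rfl fun i _ => by rw [Real.norm_eq_abs, sq_abs, real_inner_comm]
  -- integrated Parseval with shift
  have int_parseval : ∀ k : ℕ,
      (∫ ω, (∑' i, ⟪X ω, v (i + k)⟫_ℝ ^ 2) ∂ℙ) = ∑' i, lam (i + k) := by
    intro k
    have hint : ∀ i : ℕ, Integrable (fun ω => ⟪X ω, v (i + k)⟫_ℝ ^ 2) ℙ := fun i =>
      coef_sq_int (v (i + k)) (hv_norm _).le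
    have heq : ∀ i : ℕ, (∫ ω, ‖⟪X ω, v (i + k)⟫_ℝ ^ 2‖ ∂ℙ) = lam (i + k) := fun i => by
      rw [← lam_eq (i + k)]
      exact integral_congr_ae (Filter.Eventually.of_forall fun ω =>
        Real.norm_of_nonneg (sq_nonneg _))
    have hnorm : Summable fun i => ∫ ω, ‖⟪X ω, v (i + k)⟫_ℝ ^ 2‖ ∂ℙ :=
      ((summable_nat_add_iff k).2 hlam_sum).congr fun i => (heq i).symm
    rw [← integral_tsum_of_summable_integral_norm hint hnorm]
    exact tsum_congr fun i => lam_eq (i + k)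
  have total : (∫ ω, ‖X ω‖ ^ 2 ∂ℙ) = ∑' i, lam i := by
    have h0 := int_parseval 0
    simp only [add_zero] at h0
    rw [← h0]
    exact integral_congr_ae (Filter.Eventually.of_forall fun ω => (parseval (X ω)).symm)
  -- the squared norm of the truncation remainder
  have sub_sq : ∀ x : H, ‖x - ∑ i ∈ Finset.range n, ⟪x, v i⟫_ℝ • v i‖ ^ 2
      = ‖x‖ ^ 2 - ∑ i ∈ Finset.range n, ⟪x, v i⟫_ℝ ^ 2 := fun x => by
    have hy := orthonormal_norm_sq_sum hv_on (fun i => ⟪x, v i⟫_ℝ) (Finset.range n)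
    have hxy : ⟪x, ∑ i ∈ Finset.range n, ⟪x, v i⟫_ℝ • v i⟫_ℝ
        = ∑ i ∈ Finset.range n, ⟪x, v i⟫_ℝ ^ 2 := by
      rw [inner_sum]
      exact Finset.sum_congr rfl fun i _ => by rw [real_inner_smul_right, sq]
    rw [norm_sub_sq_real, hxy, hy]
    ring
  have hXn_sq_int : Integrable (fun ω => ∑ i ∈ Finset.range n, ⟪X ω, v i⟫_ℝ ^ 2) ℙ :=
    integrable_finset_sum _ fun i _ => coef_sq_int (v i) (hv_norm i).le
  have key : (∫ ω, ‖X ω - ∑ i ∈ Finset.range n, ⟪X ω, v i⟫_ℝ • v i‖ ^ 2 ∂ℙ)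
      = ∑' i, lam (i + n) := by
    have h1 : (∫ ω, ‖X ω - ∑ i ∈ Finset.range n, ⟪X ω, v i⟫_ℝ • v i‖ ^ 2 ∂ℙ)
        = ∫ ω, (‖X ω‖ ^ 2 - ∑ i ∈ Finset.range n, ⟪X ω, v i⟫_ℝ ^ 2) ∂ℙ :=
      integral_congr_ae (Filter.Eventually.of_forall fun ω => sub_sq (X ω))
    rw [h1, integral_sub hX2 hXn_sq_int, total,
      integral_finset_sum _ fun i _ => coef_sq_int (v i) (hv_norm i).le]
    have h2 : ∑ i ∈ Finset.range n, lam i + ∑' i, lam (i + n) = ∑' i, lam i :=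
      Summable.sum_add_tsum_nat_add n hlam_sum
    have h3 : ∑ i ∈ Finset.range n, (∫ ω, ⟪X ω, v i⟫_ℝ ^ 2 ∂ℙ)
        = ∑ i ∈ Finset.range n, lam i :=
      Finset.sum_congr rfl fun i _ => lam_eq i
    rw [h3]
    linarith
  -- the truncation is an admissible competitor
  have term_mem : ∀ i : ℕ, MemLp (fun ω => ⟪X ω, v i⟫_ℝ • v i) 2 ℙ := fun i => by
    have hcont : Continuous fun x : H => ⟪x, v i⟫_ℝ • v i :=
      (Continuous.inner continuous_id continuous_const).smul continuous_const
    have hm : AEStronglyMeasurable (fun ω => ⟪X ω, v i⟫_ℝ • v i) ℙ :=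
      (hcont.measurable.comp hXm).aestronglyMeasurable
    rw [memLp_two_iff_integrable_sq_norm hm]
    refine (coef_sq_int (v i) (hv_norm i).le).congr
      (Filter.Eventually.of_forall fun ω => ?_)
    show ⟪X ω, v i⟫_ℝ ^ 2 = ‖⟪X ω, v i⟫_ℝ • v i‖ ^ 2
    rw [norm_smul, hv_norm i, mul_one, Real.norm_eq_abs, sq_abs]
  have hZ₀mem : MemLp (fun ω => ∑ i ∈ Finset.range n, ⟪X ω, v i⟫_ℝ • v i) 2 ℙ :=
    memLp_finset_sum _ fun i _ => term_mem i
  have hV₀ : ∃ V : Submodule ℝ H, Module.rank ℝ V ≤ (n : Cardinal) ∧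
      ∀ᵐ ω ∂ℙ, (∑ i ∈ Finset.range n, ⟪X ω, v i⟫_ℝ • v i) ∈ V := by
    refine ⟨Submodule.span ℝ (((Finset.range n).image v : Finset H) : Set H), ?_, ?_⟩
    · refine (rank_span_finset_le _).trans ?_
      have hcard : ((Finset.range n).image v).card ≤ n :=
        le_trans Finset.card_image_le (by rw [Finset.card_range])
      exact_mod_cast hcard
    · refine Filter.Eventually.of_forall fun ω => ?_
      refine Submodule.sum_mem _ fun i hi => Submodule.smul_mem _ _ ?_
      exact Submodule.subset_span (by
        simpa using Finset.mem_image_of_mem v hi)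
  -- the spectral expansion of diagonal values
  have spect : ∀ x : H, HasSum (fun i => lam i * ⟪x, v i⟫_ℝ ^ 2) ⟪x, B x⟫_ℝ := by
    intro x
    have h1 := b.hasSum_repr x
    have h2 := h1.mapL B
    have h3 := h2.mapL (innerSL ℝ x)
    have h4 : ∀ i, (innerSL ℝ x) (B (b.repr x i • b i)) = lam i * ⟪x, v i⟫_ℝ ^ 2 := by
      intro i
      rw [_root_.map_smul, b.repr_apply_apply, hbi i, heig i]
      simp only [_root_.map_smul, innerSL_apply_apply, real_inner_smul_right, smul_eq_mul]
      rw [real_inner_comm (v i) x]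
      ring
    simp only [h4, innerSL_apply_apply] at h3
    exact h3
  -- the lower bound over all admissible competitors
  have hlb : ∀ Z : Ω → H, MemLp Z 2 ℙ →
      (∃ V : Submodule ℝ H, Module.rank ℝ V ≤ (n : Cardinal) ∧ ∀ᵐ ω ∂ℙ, Z ω ∈ V) →
      (∑' i, lam (i + n)) ≤ ∫ ω, ‖X ω - Z ω‖ ^ 2 ∂ℙ := by
    rintro Z hZ2 ⟨V, hVrank, hZV⟩
    haveI : Module.Free ℝ V := Module.Free.of_divisionRing ℝ V
    haveI : FiniteDimensional ℝ V :=
      Module.rank_lt_aleph0_iff.mp (hVrank.trans_lt (Cardinal.nat_lt_aleph0 n))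
    haveI : CompleteSpace V := FiniteDimensional.complete ℝ V
    set m := Module.finrank ℝ V with hm_def
    have hmn : m ≤ n := Module.finrank_le_of_rank_le hVrank
    set e := stdOrthonormalBasis ℝ V with he_def
    have hf : Orthonormal ℝ (fun j : Fin m => ((e j : V) : H)) := by
      have h := e.orthonormal.comp_linearIsometry V.subtypeₗᵢ
      exact h
    have hf_norm : ∀ j : Fin m, ‖((e j : V) : H)‖ = 1 := fun j => hf.1 j
    have hproj : ∀ x : H, ((V.orthogonalProjectionOnto x : H))
        = ∑ j : Fin m, ⟪((e j : V) : H), x⟫_ℝ • ((e j : V) : H) := by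
      intro x
      have h := congrArg (Subtype.val) (e.orthogonalProjectionOnto_apply_eq_sum x)
      simpa using h
    have hP_sq : ∀ x : H, ‖(V.orthogonalProjectionOnto x : H)‖ ^ 2
        = ∑ j : Fin m, ⟪((e j : V) : H), x⟫_ℝ ^ 2 := fun x => by
      rw [hproj x]
      exact orthonormal_norm_sq_sum hf _ Finset.univ
    have hPyth : ∀ x : H, ‖x‖ ^ 2 = ‖(V.orthogonalProjectionOnto x : H)‖ ^ 2
        + ‖x - (V.orthogonalProjectionOnto x : H)‖ ^ 2 := by
      intro x
      have h := Submodule.norm_sq_eq_add_norm_sq_projection x V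
      have h2 : ‖Vᗮ.orthogonalProjectionOnto x‖ = ‖x - (V.orthogonalProjectionOnto x : H)‖ := by
        rw [Submodule.orthogonalProjectionOnto_orthogonal]
        rfl
      rw [h, h2, Submodule.coe_norm]
    have hPX_meas : AEStronglyMeasurable
        (fun ω => ‖(V.orthogonalProjectionOnto (X ω) : H)‖ ^ 2) ℙ := by
      have hcont : Continuous fun x : H => ‖(V.orthogonalProjectionOnto x : H)‖ ^ 2 :=
        ((continuous_subtype_val.comp V.orthogonalProjectionOnto.continuous).norm.pow 2)
      exact (hcont.measurable.comp hXm).aestronglyMeasurable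
    have hPX_int : Integrable (fun ω => ‖(V.orthogonalProjectionOnto (X ω) : H)‖ ^ 2) ℙ := by
      refine hX2.mono' hPX_meas (Filter.Eventually.of_forall fun ω => ?_)
      have h := hPyth (X ω)
      rw [Real.norm_eq_abs, abs_of_nonneg (by positivity)]
      nlinarith [sq_nonneg ‖X ω - (V.orthogonalProjectionOnto (X ω) : H)‖]
    have hXZ_int : Integrable (fun ω => ‖X ω - Z ω‖ ^ 2) ℙ := by
      have hX2' : MemLp X 2 ℙ :=
        (memLp_two_iff_integrable_sq_norm hXm.aestronglyMeasurable).2 hX2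
      have hsub := hX2'.sub hZ2
      exact (memLp_two_iff_integrable_sq_norm hsub.aestronglyMeasurable).1 hsub
    have hae : ∀ᵐ ω ∂ℙ, ‖X ω‖ ^ 2 - ‖(V.orthogonalProjectionOnto (X ω) : H)‖ ^ 2
        ≤ ‖X ω - Z ω‖ ^ 2 := by
      filter_upwards [hZV] with ω hωV
      have h1 : ‖X ω - (V.orthogonalProjectionOnto (X ω) : H)‖ ≤ ‖X ω - Z ω‖ := by
        rw [← Submodule.starProjection_apply, Submodule.starProjection_minimal]
        exact ciInf_le ⟨0, by rintro r ⟨y, rfl⟩; exact norm_nonneg _⟩ (⟨Z ω, hωV⟩ : V)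
      have h2 := hPyth (X ω)
      have h3 : ‖X ω - (V.orthogonalProjectionOnto (X ω) : H)‖ ^ 2 ≤ ‖X ω - Z ω‖ ^ 2 :=
        pow_le_pow_left₀ (norm_nonneg _) h1 2
      linarith
    have hPX_val : (∫ ω, ‖(V.orthogonalProjectionOnto (X ω) : H)‖ ^ 2 ∂ℙ)
        = ∑ j : Fin m, ⟪((e j : V) : H), B ((e j : V) : H)⟫_ℝ := by
      have h1 : (∫ ω, ‖(V.orthogonalProjectionOnto (X ω) : H)‖ ^ 2 ∂ℙ)
          = ∫ ω, ∑ j : Fin m, ⟪((e j : V) : H), X ω⟫_ℝ ^ 2 ∂ℙ :=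
        integral_congr_ae (Filter.Eventually.of_forall fun ω => hP_sq (X ω))
      rw [h1, integral_finset_sum]
      · exact Finset.sum_congr rfl fun j _ => (B_diag _).symm
      · intro j _
        refine (coef_sq_int ((e j : V) : H) (hf_norm j).le).congr
          (Filter.Eventually.of_forall fun ω => congrArg (· ^ 2) (real_inner_comm _ _))
    -- Ky Fan argument
    set c : ℕ → ℝ := fun i => ∑ j : Fin m, ⟪((e j : V) : H), v i⟫_ℝ ^ 2 with hc_def
    have hc0 : ∀ i, 0 ≤ c i := fun i => Finset.sum_nonneg fun j _ => sq_nonneg _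
    have hc1 : ∀ i, c i ≤ 1 := fun i => by
      have h := hf.sum_inner_products_le (v i) (s := Finset.univ)
      rw [hv_norm i, one_pow] at h
      refine le_trans (le_of_eq ?_) h
      exact Finset.sum_congr rfl fun j _ => by rw [Real.norm_eq_abs, sq_abs]
    have hsummable_fj : ∀ j : Fin m, Summable fun i => ⟪((e j : V) : H), v i⟫_ℝ ^ 2 := fun j =>
      summable_coef _
    have hcs : Summable c := ⟨_, hasSum_sum fun j _ => (hsummable_fj j).hasSum⟩
    have hc_tsum : (∑' i, c i) = (m : ℝ) := by
      have h1 : (∑' i, c i)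
          = ∑ j : Fin m, ∑' i, ⟪((e j : V) : H), v i⟫_ℝ ^ 2 :=
        Summable.tsum_finsetSum fun j _ => hsummable_fj j
      have h2 : ∀ j : Fin m, (∑' i, ⟪((e j : V) : H), v i⟫_ℝ ^ 2) = 1 := fun j => by
        rw [parseval, hf_norm j, one_pow]
      rw [h1]
      simp [h2]
    have hlc : Summable fun i => lam i * c i :=
      Summable.of_nonneg_of_le (fun i => mul_nonneg (hlam_nonneg i) (hc0 i))
        (fun i => mul_le_of_le_one_right (hlam_nonneg i) (hc1 i)) hlam_sum
    have hdiag_sum : ∑ j : Fin m, ⟪((e j : V) : H), B ((e j : V) : H)⟫_ℝ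
        = ∑' i, lam i * c i := by
      calc ∑ j : Fin m, ⟪((e j : V) : H), B ((e j : V) : H)⟫_ℝ
          = ∑ j : Fin m, ∑' i, lam i * ⟪((e j : V) : H), v i⟫_ℝ ^ 2 :=
            Finset.sum_congr rfl fun j _ => (spect _).tsum_eq.symm
        _ = ∑' i, ∑ j : Fin m, lam i * ⟪((e j : V) : H), v i⟫_ℝ ^ 2 :=
            (Summable.tsum_finsetSum fun j _ => (spect _).summable).symm
        _ = ∑' i, lam i * c i := tsum_congr fun i => by simp only [hc_def, Finset.mul_sum]
    have hkyfan : ∑' i, lam i * c i ≤ ∑ i ∈ Finset.range n, lam i := by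
      refine le_trans (kyfan_aux lam c m hlam_mono hc0 hcs hlc hc1 hc_tsum) ?_
      exact Finset.sum_le_sum_of_subset_of_nonneg
        (Finset.range_subset_range.2 hmn) fun i _ _ => hlam_nonneg i
    have hchain : (∫ ω, (‖X ω‖ ^ 2 - ‖(V.orthogonalProjectionOnto (X ω) : H)‖ ^ 2) ∂ℙ)
        ≤ ∫ ω, ‖X ω - Z ω‖ ^ 2 ∂ℙ :=
      integral_mono_ae (hX2.sub hPX_int) hXZ_int hae
    rw [integral_sub hX2 hPX_int, total, hPX_val, hdiag_sum] at hchain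
    have htail : ∑ i ∈ Finset.range n, lam i + ∑' i, lam (i + n) = ∑' i, lam i :=
      Summable.sum_add_tsum_nat_add n hlam_sum
    linarith
  -- assemble
  have hmem : (∑' i, lam (i + n)) ∈ {r : ℝ | ∃ Z : Ω → H, MemLp Z 2 ℙ ∧
      (∃ V : Submodule ℝ H, Module.rank ℝ V ≤ (n : Cardinal) ∧ ∀ᵐ ω ∂ℙ, Z ω ∈ V) ∧
      r = ∫ ω, ‖X ω - Z ω‖ ^ 2 ∂ℙ} :=
    ⟨_, hZ₀mem, hV₀, key.symm⟩
  have hbdd : ∀ r ∈ {r : ℝ | ∃ Z : Ω → H, MemLp Z 2 ℙ ∧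
      (∃ V : Submodule ℝ H, Module.rank ℝ V ≤ (n : Cardinal) ∧ ∀ᵐ ω ∂ℙ, Z ω ∈ V) ∧
      r = ∫ ω, ‖X ω - Z ω‖ ^ 2 ∂ℙ}, (∑' i, lam (i + n)) ≤ r := by
    rintro r ⟨Z, hZ2, hV, rfl⟩
    exact hlb Z hZ2 hV
  have hInf : sInf {r : ℝ | ∃ Z : Ω → H, MemLp Z 2 ℙ ∧
      (∃ V : Submodule ℝ H, Module.rank ℝ V ≤ (n : Cardinal) ∧ ∀ᵐ ω ∂ℙ, Z ω ∈ V) ∧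
      r = ∫ ω, ‖X ω - Z ω‖ ^ 2 ∂ℙ} = ∑' i, lam (i + n) :=
    le_antisymm (csInf_le ⟨_, hbdd⟩ hmem) (le_csInf ⟨_, hmem⟩ hbdd)
  have hshift : (∑' i, lam (i + n)) = ∑' i, lam (n + i) :=
    tsum_congr fun i => by rw [add_comm]
  exact ⟨key.trans hInf.symm, hInf.trans hshift⟩
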